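/- arXiv:2109.10735 — 2 statements merged into one kernel-verified Lean document; each statement's English description precedes it below -/
import Mathlib

section
/- Let $a_0, a_1, \ldots, a_7, a_9, a_{10}$ be nonnegative integers satisfying $a_1 \geq a_2 \geq \cdots \geq a_7$ and $a_9 + a_{10} \geq a_0 \geq a_9 \geq a_{10}$, and assume that at least one of these integers is odd. Then one of the following holds: (i) there exist three distinct indices $k, l, m \in \{1, \ldots, 7\}$ and $i \in \{9, 10\}$ such that $a_i + a_k + a_l + a_m$ is odd; (ii) $a_0 > 0$ is odd and all of $a_1, \ldots, a_7, a_9, a_{10}$ are even; (iii) $a_0 > 0$ and all of $a_1, \ldots, a_7, a_9, a_{10}$ are odd. -/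
lemma key_aux (a : ℕ → ℕ) (p q : ℕ) (hp : p ∈ Finset.Icc 1 7) (hq : q ∈ Finset.Icc 1 7)
    (hpq : a p % 2 ≠ a q % 2) :
    ∃ k ∈ Finset.Icc 1 7, ∃ l ∈ Finset.Icc 1 7, ∃ m ∈ Finset.Icc 1 7,
      k ≠ l ∧ k ≠ m ∧ l ≠ m ∧ ∃ i ∈ ({9,10} : Finset ℕ), Odd (a i + a k + a l + a m) := by
  have hpq' : p ≠ q := fun h => hpq (by rw [h])
  set S := ((Finset.Icc 1 7).erase p).erase q with hS
  have hcard : 5 ≤ S.card := by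
    have h7 : (Finset.Icc 1 7).card = 7 := by decide
    have e1 : (Finset.Icc 1 7).card - 1 ≤ ((Finset.Icc 1 7).erase p).card :=
      Finset.pred_card_le_card_erase
    have e2 : ((Finset.Icc 1 7).erase p).card - 1 ≤ S.card :=
      Finset.pred_card_le_card_erase
    omega
  obtain ⟨r, hr⟩ : S.Nonempty := Finset.card_pos.mp (by omega)
  obtain ⟨s, hs⟩ : (S.erase r).Nonempty := by
    have : 1 ≤ (S.erase r).card := by
      have := Finset.pred_card_le_card_erase (s := S) (a := r)
      omega
    exact Finset.card_pos.mp this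
  have hsr : s ≠ r := (Finset.mem_erase.mp hs).1
  have hsS : s ∈ S := (Finset.mem_erase.mp hs).2
  have hrq : r ≠ q := (Finset.mem_erase.mp hr).1
  have hrp : r ≠ p := (Finset.mem_erase.mp (Finset.mem_erase.mp hr).2).1
  have hrI : r ∈ Finset.Icc 1 7 := (Finset.mem_erase.mp (Finset.mem_erase.mp hr).2).2
  have hsq : s ≠ q := (Finset.mem_erase.mp hsS).1
  have hsp : s ≠ p := (Finset.mem_erase.mp (Finset.mem_erase.mp hsS).2).1
  have hsI : s ∈ Finset.Icc 1 7 := (Finset.mem_erase.mp (Finset.mem_erase.mp hsS).2).2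
  have h9 : (9 : ℕ) ∈ ({9,10} : Finset ℕ) := by decide
  by_cases h : (a 9 + a p + a r + a s) % 2 = 1
  · exact ⟨p, hp, r, hrI, s, hsI, hrp.symm, hsp.symm, hsr.symm, 9, h9, Nat.odd_iff.mpr h⟩
  · refine ⟨q, hq, r, hrI, s, hsI, hrq.symm, hsq.symm, hsr.symm, 9, h9, Nat.odd_iff.mpr ?_⟩
    omega

theorem stmt_0 (a : ℕ → ℕ)
    (hmono : ∀ i j, 1 ≤ i → i ≤ j → j ≤ 7 → a j ≤ a i)
    (h1 : a 9 + a 10 ≥ a 0) (h2 : a 0 ≥ a 9) (h3 : a 9 ≥ a 10)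
    (hodd : ∃ i ∈ ({0,1,2,3,4,5,6,7,9,10} : Finset ℕ), Odd (a i)) :
    (∃ k ∈ Finset.Icc 1 7, ∃ l ∈ Finset.Icc 1 7, ∃ m ∈ Finset.Icc 1 7,
      k ≠ l ∧ k ≠ m ∧ l ≠ m ∧ ∃ i ∈ ({9,10} : Finset ℕ), Odd (a i + a k + a l + a m))
    ∨ (0 < a 0 ∧ Odd (a 0) ∧ ∀ i ∈ ({1,2,3,4,5,6,7,9,10} : Finset ℕ), Even (a i))
    ∨ (0 < a 0 ∧ ∀ i ∈ ({1,2,3,4,5,6,7,9,10} : Finset ℕ), Odd (a i)) := by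
  by_cases hA : ∀ i ∈ Finset.Icc 1 7, a i % 2 = a 1 % 2
  · -- all of a 1 .. a 7 have the same parity
    have m1 : (1:ℕ) ∈ Finset.Icc 1 7 := by decide
    have m2 : (2:ℕ) ∈ Finset.Icc 1 7 := by decide
    have m3 : (3:ℕ) ∈ Finset.Icc 1 7 := by decide
    have p2 := hA 2 m2
    have p3 := hA 3 m3
    rcases Nat.even_or_odd (a 1) with he | ho
    · -- all even
      rw [Nat.even_iff] at he
      by_cases h9 : a 9 % 2 = 1
      · exact Or.inl ⟨1, m1, 2, m2, 3, m3, by decide, by decide, by decide, 9, by decide,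
          Nat.odd_iff.mpr (by omega)⟩
      by_cases h10 : a 10 % 2 = 1
      · exact Or.inl ⟨1, m1, 2, m2, 3, m3, by decide, by decide, by decide, 10, by decide,
          Nat.odd_iff.mpr (by omega)⟩
      · -- a 0 must be odd
        obtain ⟨i, hi, hio⟩ := hodd
        rw [Nat.odd_iff] at hio
        have hi0 : i = 0 := by
          fin_cases hi <;> first | rfl |
            (exfalso; revert hio
             first
              | (have := hA _ (by decide : (1:ℕ) ∈ Finset.Icc 1 7); omega)
              | (have := hA _ (by decide : (2:ℕ) ∈ Finset.Icc 1 7); omega)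
              | (have := hA _ (by decide : (3:ℕ) ∈ Finset.Icc 1 7); omega)
              | (have := hA _ (by decide : (4:ℕ) ∈ Finset.Icc 1 7); omega)
              | (have := hA _ (by decide : (5:ℕ) ∈ Finset.Icc 1 7); omega)
              | (have := hA _ (by decide : (6:ℕ) ∈ Finset.Icc 1 7); omega)
              | (have := hA _ (by decide : (7:ℕ) ∈ Finset.Icc 1 7); omega)
              | omega)
        subst hi0
        refine Or.inr (Or.inl ⟨by omega, Nat.odd_iff.mpr hio, ?_⟩)
        intro i hi
        rw [Nat.even_iff]
        fin_cases hi <;>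
          first
            | omega
            | (have := hA _ (by decide : (1:ℕ) ∈ Finset.Icc 1 7); omega)
            | (have := hA _ (by decide : (2:ℕ) ∈ Finset.Icc 1 7); omega)
            | (have := hA _ (by decide : (3:ℕ) ∈ Finset.Icc 1 7); omega)
            | (have := hA _ (by decide : (4:ℕ) ∈ Finset.Icc 1 7); omega)
            | (have := hA _ (by decide : (5:ℕ) ∈ Finset.Icc 1 7); omega)
            | (have := hA _ (by decide : (6:ℕ) ∈ Finset.Icc 1 7); omega)
            | (have := hA _ (by decide : (7:ℕ) ∈ Finset.Icc 1 7); omega)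
    · -- all odd
      rw [Nat.odd_iff] at ho
      by_cases h9 : a 9 % 2 = 0
      · exact Or.inl ⟨1, m1, 2, m2, 3, m3, by decide, by decide, by decide, 9, by decide,
          Nat.odd_iff.mpr (by omega)⟩
      by_cases h10 : a 10 % 2 = 0
      · exact Or.inl ⟨1, m1, 2, m2, 3, m3, by decide, by decide, by decide, 10, by decide,
          Nat.odd_iff.mpr (by omega)⟩
      · refine Or.inr (Or.inr ⟨by omega, ?_⟩)
        intro i hi
        rw [Nat.odd_iff]
        fin_cases hi <;>
          first
            | omega
            | (have := hA _ (by decide : (1:ℕ) ∈ Finset.Icc 1 7); omega)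
            | (have := hA _ (by decide : (2:ℕ) ∈ Finset.Icc 1 7); omega)
            | (have := hA _ (by decide : (3:ℕ) ∈ Finset.Icc 1 7); omega)
            | (have := hA _ (by decide : (4:ℕ) ∈ Finset.Icc 1 7); omega)
            | (have := hA _ (by decide : (5:ℕ) ∈ Finset.Icc 1 7); omega)
            | (have := hA _ (by decide : (6:ℕ) ∈ Finset.Icc 1 7); omega)
            | (have := hA _ (by decide : (7:ℕ) ∈ Finset.Icc 1 7); omega)
  · push_neg at hA
    obtain ⟨q, hq, hq'⟩ := hA
    exact Or.inl (key_aux a 1 q (by decide) hq (fun h => hq' h.symm))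
end

section
/- Let $c_2, c_3, c_4, c_5, c_6, c_9, c_{10}$ be nonnegative integers with $c_2 \geq c_3 \geq c_4$ and $c_5 \geq c_6$. Set $c_7 = c_8 = 0$, and assume $c_9 + c_2 + c_3 + c_4$ is odd. Assume further the minimality condition: there exist no $i \in \{9, 10\}$ and pairwise distinct $k, l, m \in \{2, 3, \ldots, 8\}$ such that $c_i + c_k + c_l + c_m$ is odd and $c_k + c_l + c_m < c_2 + c_3 + c_4$. Then $c_3 = c_4 = 0$. -/
theorem stmt_11 (c : ℕ → ℕ)
    (h23 : c 2 ≥ c 3) (h34 : c 3 ≥ c 4) (h56 : c 5 ≥ c 6)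
    (h7 : c 7 = 0) (h8 : c 8 = 0)
    (hodd : Odd (c 9 + c 2 + c 3 + c 4))
    (hmin : ¬ ∃ i ∈ ({9, 10} : Finset ℕ), ∃ k ∈ Finset.Icc 2 8, ∃ l ∈ Finset.Icc 2 8,
      ∃ m ∈ Finset.Icc 2 8, k ≠ l ∧ k ≠ m ∧ l ≠ m ∧
      Odd (c i + c k + c l + c m) ∧ c k + c l + c m < c 2 + c 3 + c 4) :
    c 3 = 0 ∧ c 4 = 0 := by
  have h3 : c 3 = 0 := by
    by_contra h3
    have h3pos : 0 < c 3 := Nat.pos_of_ne_zero h3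
    have h2pos : 0 < c 2 := lt_of_lt_of_le h3pos h23
    obtain ⟨t, ht⟩ := hodd
    rcases Nat.even_or_odd (c 3) with ⟨a, ha⟩ | ⟨a, ha⟩
    · -- c 3 even: replace it by c 8 = 0
      exact hmin ⟨9, by decide, 2, by decide, 4, by decide, 8, by decide,
        by omega, by omega, by omega,
        ⟨t - a, by omega⟩, by omega⟩
    · rcases Nat.even_or_odd (c 2) with ⟨b, hb⟩ | ⟨b, hb⟩
      · -- c 2 even: replace it by c 8 = 0
        exact hmin ⟨9, by decide, 3, by decide, 4, by decide, 8, by decide,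
          by omega, by omega, by omega,
          ⟨t - b, by omega⟩, by omega⟩
      · -- c 2, c 3 both odd: replace both by zeros
        exact hmin ⟨9, by decide, 4, by decide, 7, by decide, 8, by decide,
          by omega, by omega, by omega,
          ⟨t - a - b - 1, by omega⟩, by omega⟩
  exact ⟨h3, by omega⟩
end
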